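/- With B skew-symmetrizable, SRB skew-symmetric for positive diagonal integer matrices S, R, and E_k^ε as above, the generalized matrix mutation satisfies μ_k^g(B) = E_k^ε · B · R^{-1} S^{-1} · (E_k^ε)^⊤ · S R for either sign ε. -/

import Mathlib

open Matrix

/-- The generalized matrix mutation `μ_k^g` in direction `k`, with parameters `r`. -/
def genMut {n : ℕ} (r : Fin n → ℤ) (k : Fin n)
    (B : Matrix (Fin n) (Fin n) ℤ) : Matrix (Fin n) (Fin n) ℤ :=
  Matrix.of fun i j =>
    if i = k ∨ j = k then -B i j
    else B i j + r k * (B i k * max (-B k j) 0 + max (B i k) 0 * B k j)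

/-- The matrix `E_k^ε` (over ℚ): identity except in column `k`, where `e_{kk} = -1`
and `e_{ik} = [ε b_{ik}]₊ · r_k` for `i ≠ k`. -/
def Emat {n : ℕ} (r : Fin n → ℤ) (B : Matrix (Fin n) (Fin n) ℤ) (k : Fin n) (ε : ℤ) :
    Matrix (Fin n) (Fin n) ℚ :=
  Matrix.of fun i l =>
    if l ≠ k then (if i = l then 1 else 0)
    else if i = k then -1 else ((max (ε * B i k) 0 * r k : ℤ) : ℚ)

lemma max_sub_max_neg (x : ℤ) : max x 0 - max (-x) 0 = x := by
  rcases le_total 0 x with h | h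
  · rw [max_eq_left h, max_eq_right (neg_nonpos.mpr h)]; ring
  · rw [max_eq_right h, max_eq_left (neg_nonneg.mpr h)]; ring

lemma key_maxid (x y : ℤ) : max (-x) 0 * y + x * max y 0 = max x 0 * y + x * max (-y) 0 := by
  linear_combination (-y) * max_sub_max_neg x + x * max_sub_max_neg y

lemma Emat_mul {n : ℕ} (r : Fin n → ℤ) (B : Matrix (Fin n) (Fin n) ℤ) (k : Fin n) (ε : ℤ)
    (M : Matrix (Fin n) (Fin n) ℚ) (i b : Fin n) :
    (Emat r B k ε * M) i b =
      (if i = k then -1 else ((max (ε * B i k) 0 * r k : ℤ) : ℚ)) * M k b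
      + (if i = k then 0 else M i b) := by
  classical
  rw [Matrix.mul_apply, ← Finset.add_sum_erase _ _ (Finset.mem_univ k)]
  congr 1
  · simp [Emat]
  · by_cases hik : i = k
    · rw [if_pos hik]
      refine Finset.sum_eq_zero fun a ha => ?_
      have hak : a ≠ k := Finset.ne_of_mem_erase ha
      have hia : i ≠ a := fun h => hak ((h.symm.trans hik))
      simp [Emat, hak, hia]
    · rw [if_neg hik, Finset.sum_eq_single_of_mem i
        (Finset.mem_erase.2 ⟨hik, Finset.mem_univ i⟩)]
      · simp [Emat, hik]
      · intro a ha hai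
        have hak : a ≠ k := Finset.ne_of_mem_erase ha
        simp [Emat, hak, Ne.symm hai]

lemma sum_erase_emat {n : ℕ} (r : Fin n → ℤ) (B : Matrix (Fin n) (Fin n) ℤ) (k : Fin n)
    (ε : ℤ) (f : Fin n → ℚ) (j : Fin n) :
    ∑ b ∈ Finset.univ.erase k, f b * Emat r B k ε j b = if j = k then 0 else f j := by
  by_cases hjk : j = k
  · rw [if_pos hjk]
    refine Finset.sum_eq_zero fun b hb => ?_
    have hbk : b ≠ k := Finset.ne_of_mem_erase hb
    have hjb : j ≠ b := fun h => hbk (h.symm.trans hjk)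
    simp [Emat, hbk, hjb]
  · rw [if_neg hjk, Finset.sum_eq_single_of_mem j
      (Finset.mem_erase.2 ⟨hjk, Finset.mem_univ j⟩)]
    · simp [Emat, hjk]
    · intro b hb hbj
      simp [Emat, Finset.ne_of_mem_erase hb, Ne.symm hbj]

/-- `μ_k^g(B) = E_k^ε · B · R⁻¹ S⁻¹ · (E_k^ε)ᵀ · S R` for either sign `ε`,
with `S`, `R` positive integer diagonal and `S·R·B` skew-symmetric. -/
theorem genMut_eq_Emat_conj (n : ℕ) (r s : Fin n → ℤ) (hr : ∀ i, 0 < r i) (hs : ∀ i, 0 < s i)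
    (B : Matrix (Fin n) (Fin n) ℤ)
    (hskew : (Matrix.diagonal s * Matrix.diagonal r * B)ᵀ =
      -(Matrix.diagonal s * Matrix.diagonal r * B))
    (k : Fin n) (ε : ℤ) (hε : ε = 1 ∨ ε = -1) :
    (genMut r k B).map (Int.cast : ℤ → ℚ) =
      Emat r B k ε * B.map (Int.cast : ℤ → ℚ) *
        (Matrix.diagonal fun i => ((r i : ℚ))⁻¹) *
        (Matrix.diagonal fun i => ((s i : ℚ))⁻¹) *
        (Emat r B k ε)ᵀ *
        (Matrix.diagonal fun i => (s i : ℚ)) *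
        (Matrix.diagonal fun i => (r i : ℚ)) := by
  classical
  have hsk : ∀ i j, s i * (r i * B i j) = -(s j * (r j * B j i)) := by
    intro i j
    have h := congrFun (congrFun hskew j) i
    simpa [Matrix.transpose_apply, Matrix.diagonal_mul_diagonal, Matrix.diagonal_mul,
      Pi.mul_apply, mul_assoc] using h
  have hBkk : B k k = 0 := by
    have h := hsk k k
    have h2 : s k * (r k * B k k) = 0 := by linarith
    rcases mul_eq_zero.mp h2 with h3 | h3
    · exact absurd h3 (hs k).ne'
    rcases mul_eq_zero.mp h3 with h4 | h4
    · exact absurd h4 (hr k).ne'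
    · exact h4
  have hsign : ∀ j, max (ε * B j k) 0 * (s j * r j) = max (-(ε * B k j)) 0 * (s k * r k) := by
    intro j
    have hpos1 : (0:ℤ) ≤ s j * r j := mul_nonneg (hs j).le (hr j).le
    have hpos2 : (0:ℤ) ≤ s k * r k := mul_nonneg (hs k).le (hr k).le
    rw [max_mul_of_nonneg _ _ hpos1, max_mul_of_nonneg _ _ hpos2, zero_mul, zero_mul]
    congr 1
    linear_combination ε * (hsk j k)
  ext i j
  rw [Matrix.map_apply, Matrix.mul_diagonal, Matrix.mul_diagonal, Matrix.mul_apply]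
  simp only [Matrix.mul_diagonal, Matrix.transpose_apply]
  rw [← Finset.add_sum_erase _ _ (Finset.mem_univ k), sum_erase_emat]
  have hEjk : Emat r B k ε j k
      = if j = k then -1 else ((max (ε * B j k) 0 * r k : ℤ) : ℚ) := by simp [Emat]
  rw [hEjk, Emat_mul, Emat_mul]
  simp only [Matrix.map_apply, genMut, Matrix.of_apply]
  have hrk : ((r k : ℚ)) ≠ 0 := Int.cast_ne_zero.mpr (hr k).ne'
  have hsk' : ((s k : ℚ)) ≠ 0 := Int.cast_ne_zero.mpr (hs k).ne'
  have hrj : ((r j : ℚ)) ≠ 0 := Int.cast_ne_zero.mpr (hr j).ne'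
  have hsj : ((s j : ℚ)) ≠ 0 := Int.cast_ne_zero.mpr (hs j).ne'
  have hsignQ : ((max (ε * B j k) 0 : ℤ) : ℚ) * (s j * r j)
      = ((max (-(ε * B k j)) 0 : ℤ) : ℚ) * (s k * r k) := by
    exact_mod_cast congrArg (Int.cast : ℤ → ℚ) (hsign j)
  by_cases hik : i = k <;> by_cases hjk : j = k
  · subst hik; subst hjk
    simp only [if_pos rfl, if_pos (Or.inl rfl), eq_self_iff_true, true_or, or_true, if_true]
    push_cast [hBkk]
    field_simp
    simp
  · subst hik
    simp only [if_pos rfl, if_neg hjk, if_pos (Or.inl rfl), eq_self_iff_true, true_or, or_true, if_true]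
    push_cast [hBkk]
    field_simp
    ring
  · subst hjk
    simp only [if_neg hik, if_pos rfl, if_pos (Or.inr rfl), eq_self_iff_true, true_or, or_true, if_true]
    push_cast [hBkk]
    field_simp
    ring
  · have hor : ¬ (i = k ∨ j = k) := by tauto
    simp only [if_neg hik, if_neg hjk, if_neg hor]
    have hkey : max (-B i k) 0 * B k j + B i k * max (B k j) 0
        = max (B i k) 0 * B k j + B i k * max (-B k j) 0 := key_maxid (B i k) (B k j)
    push_cast at hsignQ
    rcases hε with rfl | rfl
    · push_cast [hBkk]
      field_simp
      norm_num at hsignQ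
      linear_combination (-(B i k : ℚ)) * hsignQ
    · push_cast [hBkk]
      field_simp
      norm_num at hsignQ
      have hkeyQ : ((-(B i k) ⊔ 0 : ℤ) : ℚ) * B k j + (B i k : ℚ) * ((B k j ⊔ 0 : ℤ) : ℚ)
          = ((B i k ⊔ 0 : ℤ) : ℚ) * B k j + (B i k : ℚ) * ((-(B k j) ⊔ 0 : ℤ) : ℚ) := by
        exact_mod_cast congrArg (Int.cast : ℤ → ℚ) hkey
      push_cast at hkeyQ
      linear_combination (-(B i k : ℚ)) * hsignQ
        - (r k : ℚ) * s k * hkeyQ
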